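/- Let φ ∈ 𝒪ₙ with φ(0) = 0 and μ(φ) < ∞, X = φ⁻¹(0), and let p(x) = a₁x₁ + ⋯ + aₙxₙ be a linear function with a₁ ≠ 0. Then {g ∈ 𝒪ₙ : g·(∂φ/∂x₁) ∈ ⟨φ⟩ + J(p,φ)} = dp(Θ_X), i.e. a germ g satisfies g·(∂φ/∂x₁) ∈ ⟨φ⟩ + J(p,φ) if and only if g = Σᵢ aᵢξᵢ for some ξ = (ξ₁,…,ξₙ) ∈ Θ_X. -/
import Mathlib


set_option maxHeartbeats 1000000
set_option synthInstance.maxHeartbeats 400000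

open Filter Topology Module

noncomputable section

namespace BR

variable {α : Type*} (l : Filter α)

instance germAlgebra : Algebra ℂ ((l : Filter α).Germ ℂ) :=
  Algebra.ofModule
    (fun r x y => Filter.Germ.inductionOn₂ x y fun f g => by
      rw [← Filter.Germ.coe_smul, ← Filter.Germ.coe_mul, ← Filter.Germ.coe_mul,
        ← Filter.Germ.coe_smul, smul_mul_assoc])
    (fun r x y => Filter.Germ.inductionOn₂ x y fun f g => by
      rw [← Filter.Germ.coe_smul, ← Filter.Germ.coe_mul, ← Filter.Germ.coe_mul,
        ← Filter.Germ.coe_smul, mul_smul_comm])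

/-- A germ at `0` is holomorphic if it has a representative which is analytic at `0`. -/
def IsHolGerm (n : ℕ) (g : (𝓝 (0 : Fin n → ℂ)).Germ ℂ) : Prop :=
  ∃ f : (Fin n → ℂ) → ℂ, AnalyticAt ℂ f 0 ∧ (↑f : (𝓝 (0 : Fin n → ℂ)).Germ ℂ) = g

/-- `𝒪ₙ`, the local ring of germs at `0` of holomorphic functions `(ℂⁿ,0) → ℂ`,
realized as the subalgebra of all germs at `0` of `ℂ`-valued functions consisting of
those germs admitting an analytic representative. -/
def Osub (n : ℕ) : Subalgebra ℂ ((𝓝 (0 : Fin n → ℂ)).Germ ℂ) where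
  carrier := {g | IsHolGerm n g}
  add_mem' := by
    rintro a b ⟨f, hf, rfl⟩ ⟨g, hg, rfl⟩
    exact ⟨f + g, hf.add hg, (Filter.Germ.coe_add _ _)⟩
  mul_mem' := by
    rintro a b ⟨f, hf, rfl⟩ ⟨g, hg, rfl⟩
    exact ⟨f * g, hf.mul hg, (Filter.Germ.coe_mul _ _)⟩
  algebraMap_mem' := fun c => ⟨fun _ => c, analyticAt_const, by
    rw [Algebra.algebraMap_eq_smul_one, ← Filter.Germ.coe_one, ← Filter.Germ.coe_smul]
    congr 1; funext x; simp⟩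

/-- The ring `𝒪ₙ` of holomorphic germs `(ℂⁿ,0) → ℂ`. -/
def O (n : ℕ) : Type := ↥(Osub n)

instance (n : ℕ) : CommRing (O n) := inferInstanceAs (CommRing ↥(Osub n))
instance (n : ℕ) : Algebra ℂ (O n) := inferInstanceAs (Algebra ℂ ↥(Osub n))

variable {n : ℕ}

/-- The germ underlying an element of `𝒪ₙ`. -/
def toGerm (g : O n) : (𝓝 (0 : Fin n → ℂ)).Germ ℂ := (show ↥(Osub n) from g).1

lemma isHolGerm (g : O n) : IsHolGerm n (toGerm g) := (show ↥(Osub n) from g).2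

/-- The element of `𝒪ₙ` determined by a function analytic at `0`. -/
def mk (f : (Fin n → ℂ) → ℂ) (hf : AnalyticAt ℂ f 0) : O n :=
  show ↥(Osub n) from ⟨(↑f : (𝓝 (0 : Fin n → ℂ)).Germ ℂ), f, hf, rfl⟩

lemma toGerm_mk (f : (Fin n → ℂ) → ℂ) (hf : AnalyticAt ℂ f 0) :
    toGerm (mk f hf) = (↑f : (𝓝 (0 : Fin n → ℂ)).Germ ℂ) := rfl

/-- A chosen analytic representative of a holomorphic germ. -/
def rep (g : O n) : (Fin n → ℂ) → ℂ := (isHolGerm g).choose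

lemma rep_analyticAt (g : O n) : AnalyticAt ℂ (rep g) 0 := (isHolGerm g).choose_spec.1

lemma rep_spec (g : O n) : (↑(rep g) : (𝓝 (0 : Fin n → ℂ)).Germ ℂ) = toGerm g :=
  (isHolGerm g).choose_spec.2

/-- The value at the origin of a holomorphic germ. -/
def value (g : O n) : ℂ :=
  Filter.Germ.liftOn (toGerm g) (fun f => f 0) fun _ _ h => h.eq_of_nhds

/-- The partial derivative `∂g/∂xᵢ` of a holomorphic germ `g ∈ 𝒪ₙ`. -/
def pd (i : Fin n) (g : O n) : O n :=
  mk (fun x => fderiv ℂ (rep g) x (Pi.single i 1))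
    (by
      have h1 : AnalyticAt ℂ (fderiv ℂ (rep g)) 0 := (rep_analyticAt g).fderiv
      exact ((ContinuousLinearMap.apply ℂ ℂ (Pi.single i 1)).analyticAt _).comp h1)

/-- The evaluation `ξ ↦ df(ξ) = ∑ᵢ ξᵢ ∂f/∂xᵢ` of the differential of `f`
on vector fields, as an `𝒪ₙ`-linear map. -/
def evalD (f : O n) : (Fin n → O n) →ₗ[O n] O n where
  toFun ξ := ∑ i, ξ i * pd i f
  map_add' ξ η := by simp [add_mul, Finset.sum_add_distrib]
  map_smul' c ξ := by simp [Finset.mul_sum, mul_assoc]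

/-- The Jacobian ideal `Jh = ⟨∂h/∂x₁, …, ∂h/∂xₙ⟩` of `h ∈ 𝒪ₙ`. -/
def J (h : O n) : Ideal (O n) := Ideal.span (Set.range fun i => pd i h)

/-- The Milnor number `μ(h) = dim_ℂ 𝒪ₙ/Jh`. -/
def milnor (h : O n) : ℕ := finrank ℂ (O n ⧸ J h)

/-- The ideal `J(f,φ)` generated by the `2×2` minors of the Jacobian matrix of `(f,φ)`. -/
def Jpair (f φ : O n) : Ideal (O n) :=
  Ideal.span {h | ∃ i j, h = pd i f * pd j φ - pd j f * pd i φ}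

/-- `Θ_X`: the `𝒪ₙ`-module of vector fields tangent to `X = φ⁻¹(0)`, i.e. those
`ξ ∈ 𝒪ₙⁿ` with `∑ᵢ ξᵢ ∂φ/∂xᵢ ∈ ⟨φ⟩`. -/
def ThetaX (φ : O n) : Submodule (O n) (Fin n → O n) :=
  Submodule.comap (evalD φ) (Ideal.span {φ})

/-- `Θ_X^T`: the submodule of `Θ_X` generated by the trivial vector fields
`φ ∂/∂xᵢ` and `(∂φ/∂xⱼ) ∂/∂xₖ − (∂φ/∂xₖ) ∂/∂xⱼ` (`j ≠ k`). -/
def ThetaXT (φ : O n) : Submodule (O n) (Fin n → O n) :=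
  Submodule.span (O n)
    ({v : Fin n → O n | ∃ i : Fin n, v = Pi.single i φ} ∪
      {v : Fin n → O n | ∃ j k : Fin n, j ≠ k ∧
        v = Pi.single k (pd j φ) - Pi.single j (pd k φ)})

/-- The ideal `df(Θ_X) = {df(ξ) : ξ ∈ Θ_X}`. -/
def dTheta (f φ : O n) : Ideal (O n) := Submodule.map (evalD f) (ThetaX φ)

/-- The ideal `df(Θ_X^T)`. -/
def dThetaT (f φ : O n) : Ideal (O n) := Submodule.map (evalD f) (ThetaXT φ)

/-- The Bruce–Roberts number `μ_BR(f, X) = dim_ℂ 𝒪ₙ/df(Θ_X)`. -/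
def muBR (f φ : O n) : ℕ := finrank ℂ (O n ⧸ dTheta f φ)

/-- The Tjurina number `τ(X,0) = dim_ℂ 𝒪ₙ/(⟨φ⟩ + Jφ)`. -/
def tjurina (φ : O n) : ℕ := finrank ℂ (O n ⧸ (Ideal.span {φ} ⊔ J φ))

/-- The quotient `A/B` of two ideals of `𝒪ₙ` (with `B ⊆ A` in applications),
as a `ℂ`-vector space. -/
abbrev idealQuot (A B : Ideal (O n)) :=
  (A.restrictScalars ℂ) ⧸
    (Submodule.comap (A.restrictScalars ℂ).subtype (B.restrictScalars ℂ))

/-- The quotient `N/P` of two submodules of `𝒪ₙⁿ` (with `P ⊆ N` in applications),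
as a `ℂ`-vector space. -/
abbrev submodQuot (N P : Submodule (O n) (Fin n → O n)) :=
  (N.restrictScalars ℂ) ⧸
    (Submodule.comap (N.restrictScalars ℂ).subtype (P.restrictScalars ℂ))


/-- For a linear function `p(x) = a₁x₁ + ⋯ + aₙxₙ`, the evaluation
`ξ ↦ dp(ξ) = ∑ᵢ aᵢ ξᵢ` on vector fields, as an `𝒪ₙ`-linear map. -/
def evalL (a : Fin n → ℂ) : (Fin n → O n) →ₗ[O n] O n where
  toFun ξ := ∑ i, algebraMap ℂ (O n) (a i) * ξ i
  map_add' ξ η := by simp [mul_add, Finset.sum_add_distrib]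
  map_smul' c ξ := by simp [Finset.mul_sum, mul_left_comm]

/-- The ideal `J(p,φ)` generated by `aᵢ ∂φ/∂xⱼ − aⱼ ∂φ/∂xᵢ`, i.e. by the `2×2`
minors of the Jacobian matrix of `(p,φ)` for the linear function `p(x) = ∑ aᵢxᵢ`. -/
def Jlin (a : Fin n → ℂ) (φ : O n) : Ideal (O n) :=
  Ideal.span {h | ∃ i j : Fin n,
    h = algebraMap ℂ (O n) (a i) * pd j φ - algebraMap ℂ (O n) (a j) * pd i φ}


lemma evalD_apply (φ : O n) (ξ : Fin n → O n) : evalD φ ξ = ∑ i, ξ i * pd i φ := rfl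

lemma evalL_apply (a : Fin n → ℂ) (ξ : Fin n → O n) :
    evalL a ξ = ∑ i, algebraMap ℂ (O n) (a i) * ξ i := rfl

lemma evalD_single (φ : O n) (j : Fin n) (c : O n) :
    evalD φ (Pi.single j c) = c * pd j φ := by
  rw [evalD_apply]
  rw [Finset.sum_eq_single j]
  · simp
  · intro b _ hb; simp [Pi.single_eq_of_ne hb]
  · simp

lemma evalL_single (a : Fin n → ℂ) (j : Fin n) (c : O n) :
    evalL a (Pi.single j c) = algebraMap ℂ (O n) (a j) * c := by
  rw [evalL_apply]
  rw [Finset.sum_eq_single j]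
  · simp
  · intro b _ hb; simp [Pi.single_eq_of_ne hb]
  · simp

/-- Auxiliary ideal: elements of the form `h·φ + dφ(ζ)` with `dp(ζ) = 0`. -/
def Maux (a : Fin n → ℂ) (φ : O n) : Ideal (O n) where
  carrier := {x | ∃ h : O n, ∃ ζ : Fin n → O n,
    evalL a ζ = 0 ∧ x = h * φ + evalD φ ζ}
  zero_mem' := ⟨0, 0, by simp, by simp⟩
  add_mem' := by
    rintro x y ⟨h₁, ζ₁, hζ₁, rfl⟩ ⟨h₂, ζ₂, hζ₂, rfl⟩
    exact ⟨h₁ + h₂, ζ₁ + ζ₂, by simp [hζ₁, hζ₂], by simp [add_mul]; ring⟩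
  smul_mem' := by
    rintro c x ⟨h, ζ, hζ, rfl⟩
    refine ⟨c * h, c • ζ, by simp [hζ], ?_⟩
    simp [smul_eq_mul, mul_add, mul_assoc]

lemma sup_le_Maux (a : Fin n → ℂ) (φ : O n) :
    Ideal.span {φ} ⊔ Jlin a φ ≤ Maux a φ := by
  refine sup_le ?_ ?_
  · rw [Ideal.span_le, Set.singleton_subset_iff]
    exact ⟨1, 0, by simp, by simp⟩
  · rw [Jlin, Ideal.span_le]
    rintro x ⟨i, j, rfl⟩
    refine ⟨0, Pi.single j (algebraMap ℂ (O n) (a i))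
      - Pi.single i (algebraMap ℂ (O n) (a j)), ?_, ?_⟩
    · rw [map_sub, evalL_single, evalL_single, mul_comm, sub_self]
    · rw [map_sub, evalD_single, evalD_single, zero_mul, zero_add]

/-- claim in the proof of Theorem 3.3: for a linear function
`p(x) = ∑ aᵢxᵢ` with `a₁ ≠ 0`, a germ `g` satisfies `g ∂φ/∂x₁ ∈ ⟨φ⟩ + J(p,φ)` iff
`g ∈ dp(Θ_X)`, i.e. `g = ∑ᵢ aᵢξᵢ` for some `ξ ∈ Θ_X`. -/
theorem stmt_6 {n : ℕ} (hn : 0 < n) (φ : O n) (hφ0 : value φ = 0)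
    (hμφ : FiniteDimensional ℂ (O n ⧸ J φ))
    (a : Fin n → ℂ) (ha : a ⟨0, hn⟩ ≠ 0) (g : O n) :
    g * pd ⟨0, hn⟩ φ ∈ Ideal.span {φ} ⊔ Jlin a φ ↔
      g ∈ Submodule.map (evalL a) (ThetaX φ) := by
  set i0 : Fin n := ⟨0, hn⟩
  constructor
  · intro hmem
    obtain ⟨h, ζ, hζ, heq⟩ := sup_le_Maux a φ hmem
    set u : O n := algebraMap ℂ (O n) (a i0)⁻¹
    have hu : algebraMap ℂ (O n) (a i0) * u = 1 := by
      rw [← map_mul, mul_inv_cancel₀ ha, map_one]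
    refine ⟨Pi.single i0 (u * g) - u • ζ, ?_, ?_⟩
    · -- membership in ThetaX
      show evalD φ _ ∈ Ideal.span {φ}
      rw [map_sub, evalD_single, map_smul, smul_eq_mul]
      have : evalD φ ζ = g * pd i0 φ - h * φ := by rw [heq]; ring
      rw [this]
      rw [Ideal.mem_span_singleton']
      exact ⟨u * h, by ring⟩
    · rw [map_sub, evalL_single, map_smul, smul_eq_mul, hζ, mul_zero, sub_zero,
        ← mul_assoc, hu, one_mul]
  · rintro ⟨ξ, hξ, rfl⟩
    have hξ' : evalD φ ξ ∈ Ideal.span {φ} := hξ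
    have key : evalL a ξ * pd i0 φ
        = algebraMap ℂ (O n) (a i0) * evalD φ ξ
          + ∑ i, ξ i * (algebraMap ℂ (O n) (a i) * pd i0 φ
            - algebraMap ℂ (O n) (a i0) * pd i φ) := by
      rw [evalL_apply, evalD_apply, Finset.sum_mul, Finset.mul_sum,
        ← Finset.sum_add_distrib]
      exact Finset.sum_congr rfl fun i _ => by ring
    rw [key]
    refine Ideal.add_mem _ (Ideal.mem_sup_left (Ideal.mul_mem_left _ _ hξ'))
      (Ideal.mem_sup_right (Ideal.sum_mem _ fun i _ =>
        Ideal.mul_mem_left _ _ (Ideal.subset_span ⟨i, i0, rfl⟩)))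

end BR

end
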